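/- arXiv:1901.08763 — 5 statements merged into one kernel-verified Lean document; each statement's English description precedes it below -/
import Mathlib

section
/- Let K be a positive integer and let θ[0], θ[1], …, θ[K−1] be arbitrary real numbers. Define the normalized DFT coefficients Ω[k] = (1/K)·∑_{n=0}^{K−1} exp(−i·θ[n])·exp(−2πi·k·n/K) for every integer k (so that Ω is K-periodic in k). Then for every integer k₁, the circular autocorrelation over one full period satisfies ∑_{k=0}^{K−1} Ω[k]·conj(Ω[k+k₁]) = 1 if K divides k₁, and = 0 otherwise. -/
open Finset Complex Real

/-- The normalized DFT (nDFT) coefficients of the unit-modulus sequence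
`exp(−i·θ[n])`, defined for every integer `k`. -/
noncomputable def nDFT (K : ℕ) (θ : ℕ → ℝ) (k : ℤ) : ℂ :=
  (1 / (K : ℂ)) * ∑ n ∈ Finset.range K,
    Complex.exp (-Complex.I * (θ n : ℂ)) *
      Complex.exp (-2 * (Real.pi : ℂ) * Complex.I * (k : ℂ) * (n : ℂ) / (K : ℂ))

lemma sum_exp_eq (K : ℕ) (hK : 0 < K) (d : ℤ) :
    ∑ k ∈ Finset.range K, Complex.exp (2 * (Real.pi : ℂ) * Complex.I * d * k / K) =
      if (K : ℤ) ∣ d then (K : ℂ) else 0 := by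
  have hKc : (K : ℂ) ≠ 0 := Nat.cast_ne_zero.mpr hK.ne'
  set ζ : ℂ := Complex.exp (2 * (Real.pi : ℂ) * Complex.I * d / K) with hζ
  have hpow : ∀ k : ℕ, Complex.exp (2 * (Real.pi : ℂ) * Complex.I * d * k / K) = ζ ^ k := by
    intro k
    rw [hζ, ← Complex.exp_nat_mul]
    congr 1; field_simp
  simp only [hpow]
  by_cases hd : (K : ℤ) ∣ d
  · have hζ1 : ζ = 1 := by
      obtain ⟨c, hc⟩ := hd
      rw [hζ, hc]
      have : 2 * (Real.pi : ℂ) * Complex.I * ((K : ℤ) * c : ℤ) / K = (c : ℂ) * (2 * Real.pi * Complex.I) := by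
        push_cast; field_simp
      rw [this, Complex.exp_int_mul_two_pi_mul_I]
    simp [hζ1, hd]
  · have hζ1 : ζ ≠ 1 := by
      intro h
      rw [hζ, Complex.exp_eq_one_iff] at h
      obtain ⟨n, hn⟩ := h
      apply hd
      refine ⟨n, ?_⟩
      have hI : (Complex.I : ℂ) ≠ 0 := Complex.I_ne_zero
      have hπ : (Real.pi : ℂ) ≠ 0 := by exact_mod_cast Real.pi_ne_zero
      have : (d : ℂ) = (K : ℂ) * n := by
        field_simp at hn
        have h2 : (2 : ℂ) * Real.pi * Complex.I * d = 2 * Real.pi * Complex.I * (K * n) := by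
          linear_combination (2 * (Real.pi : ℂ) * Complex.I) * hn
        have := mul_left_cancel₀ (show (2 : ℂ) * Real.pi * Complex.I ≠ 0 by
          simp [hπ, hI, Complex.I_ne_zero]) h2
        exact this
      exact_mod_cast this
    rw [geom_sum_eq hζ1, if_neg hd]
    have hζK : ζ ^ K = 1 := by
      rw [hζ, ← Complex.exp_nat_mul]
      have : (K : ℂ) * (2 * Real.pi * Complex.I * d / K) = (d : ℂ) * (2 * Real.pi * Complex.I) := by
        field_simp
      rw [this]
      exact_mod_cast Complex.exp_int_mul_two_pi_mul_I d
    rw [hζK]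
    simp

lemma key (K : ℕ) (hK : 0 < K) (θ : ℕ → ℝ) (k₁ : ℤ) (k : ℕ) :
    nDFT K θ (k : ℤ) * (starRingEnd ℂ) (nDFT K θ ((k : ℤ) + k₁)) =
    (1/(K:ℂ))^2 * ∑ n ∈ Finset.range K, ∑ m ∈ Finset.range K,
      (Complex.exp (-Complex.I * (θ n : ℂ)) * Complex.exp (Complex.I * (θ m : ℂ)) *
        Complex.exp (2*(Real.pi:ℂ)*Complex.I*(k₁:ℂ)*(m:ℂ)/(K:ℂ))) *
      Complex.exp (2*(Real.pi:ℂ)*Complex.I*(((m : ℤ) - (n : ℤ) : ℤ):ℂ)*(k:ℂ)/(K:ℂ)) := by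
  unfold nDFT
  rw [map_mul, map_sum]
  rw [mul_mul_mul_comm, Finset.sum_mul_sum]
  congr 1
  · rw [map_div₀]; simp; ring
  · apply Finset.sum_congr rfl; intro n _
    apply Finset.sum_congr rfl; intro m _
    simp only [← Complex.exp_conj, map_mul, map_div₀, map_neg, map_ofNat,
      Complex.conj_I, Complex.conj_ofReal, map_intCast, map_natCast]
    rw [← Complex.exp_add, ← Complex.exp_add, ← Complex.exp_add, ← Complex.exp_add,
      ← Complex.exp_add]
    push_cast
    field_simp
    rw [← Complex.exp_add]
    congr 1
    ring

theorem circular_autocorrelation_of_nDFT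
    (K : ℕ) (hK : 0 < K) (θ : ℕ → ℝ) (k₁ : ℤ) :
    ∑ k ∈ Finset.range K,
        nDFT K θ (k : ℤ) * (starRingEnd ℂ) (nDFT K θ ((k : ℤ) + k₁)) =
      if (K : ℤ) ∣ k₁ then 1 else 0 := by
  have hKc : (K : ℂ) ≠ 0 := Nat.cast_ne_zero.mpr hK.ne'
  simp only [key K hK θ k₁]
  rw [← Finset.mul_sum, Finset.sum_comm]
  have step1 : ∀ n ∈ Finset.range K,
      (∑ k ∈ Finset.range K, ∑ m ∈ Finset.range K,
        (Complex.exp (-Complex.I * (θ n : ℂ)) * Complex.exp (Complex.I * (θ m : ℂ)) *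
          Complex.exp (2*(Real.pi:ℂ)*Complex.I*(k₁:ℂ)*(m:ℂ)/(K:ℂ))) *
        Complex.exp (2*(Real.pi:ℂ)*Complex.I*(((m : ℤ) - (n : ℤ) : ℤ):ℂ)*(k:ℂ)/(K:ℂ)))
      = Complex.exp (2*(Real.pi:ℂ)*Complex.I*(k₁:ℂ)*(n:ℂ)/(K:ℂ)) * K := by
    intro n hn
    rw [Finset.sum_comm]
    have inner : ∀ m ∈ Finset.range K,
        (∑ k ∈ Finset.range K,
          (Complex.exp (-Complex.I * (θ n : ℂ)) * Complex.exp (Complex.I * (θ m : ℂ)) *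
            Complex.exp (2*(Real.pi:ℂ)*Complex.I*(k₁:ℂ)*(m:ℂ)/(K:ℂ))) *
          Complex.exp (2*(Real.pi:ℂ)*Complex.I*(((m : ℤ) - (n : ℤ) : ℤ):ℂ)*(k:ℂ)/(K:ℂ)))
        = (Complex.exp (-Complex.I * (θ n : ℂ)) * Complex.exp (Complex.I * (θ m : ℂ)) *
            Complex.exp (2*(Real.pi:ℂ)*Complex.I*(k₁:ℂ)*(m:ℂ)/(K:ℂ))) *
          (if (K : ℤ) ∣ ((m : ℤ) - n) then (K : ℂ) else 0) := by
      intro m hm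
      rw [← Finset.mul_sum, sum_exp_eq K hK]
    rw [Finset.sum_congr rfl inner]
    rw [Finset.sum_eq_single n]
    · have : ((n : ℤ) - n) = 0 := by ring
      rw [if_pos (by simp [this]), ← Complex.exp_add]
      ring_nf
      rw [Complex.exp_zero, one_mul]
    · intro m hm hmn
      rw [if_neg, mul_zero]
      intro hdvd
      have h0 : (m : ℤ) - n = 0 := Int.eq_zero_of_abs_lt_dvd hdvd (by
        simp only [Finset.mem_range] at hm hn
        rw [abs_sub_lt_iff]
        constructor <;> push_cast <;> omega)
      exact hmn (by omega)
    · intro h; exact absurd hn h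
  rw [Finset.sum_congr rfl step1, ← Finset.sum_mul, sum_exp_eq K hK k₁]
  by_cases hd : (K : ℤ) ∣ k₁
  · rw [if_pos hd, if_pos hd]
    field_simp
  · rw [if_neg hd, if_neg hd]
    simp
end

section
/- Let K be a positive integer, let θ[0], …, θ[K−1] be real numbers, and let Ω[k] = (1/K)·∑_{n=0}^{K−1} exp(−i·θ[n])·exp(−2πi·k·n/K). Let Ĝ be a finite set of integers whose elements are pairwise distinct modulo K, and set P = ∑_{k̇∈Ĝ} |Ω[k̇]|². Then for every integer k, ∑_{k̄ ∈ {0,…,K−1}, k̄ ≢ k (mod K)} | ∑_{k̇∈Ĝ} conj(Ω[k̇])·Ω[k̇+k−k̄] |² = P − P². -/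
open Finset Complex Real

lemma exp_sum_orth (K : ℕ) (hK : 0 < K) (c : ℤ) :
    ∑ n ∈ Finset.range K, Complex.exp (2 * π * Complex.I * (c * n) / K) =
      if (K : ℤ) ∣ c then (K : ℂ) else 0 := by
  have hKne : (K : ℂ) ≠ 0 := Nat.cast_ne_zero.2 hK.ne'
  set z := Complex.exp (2 * π * Complex.I * c / K) with hzdef
  have hz : ∀ n : ℕ, Complex.exp (2 * π * Complex.I * (c * n) / K) = z ^ n := by
    intro n
    rw [hzdef, ← Complex.exp_nat_mul]
    congr 1
    push_cast
    ring
  simp only [hz]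
  split_ifs with h
  · obtain ⟨m, rfl⟩ := h
    have hz1 : z = 1 := by
      rw [hzdef]
      have : 2 * π * Complex.I * (K * m : ℤ) / K = (m : ℤ) * (2 * π * Complex.I) := by
        push_cast; field_simp
      rw [this, Complex.exp_int_mul_two_pi_mul_I]
    simp [hz1]
  · have h2pi : (2 * π * Complex.I : ℂ) ≠ 0 := by
      simp [Real.pi_ne_zero, Complex.I_ne_zero, Complex.ofReal_ne_zero]
    have hz1 : z ≠ 1 := by
      intro hz1
      rw [hzdef, Complex.exp_eq_one_iff] at hz1
      obtain ⟨n, hn⟩ := hz1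
      apply h
      refine ⟨n, ?_⟩
      have hc : (2 * (π:ℂ) * Complex.I) * c = (2 * (π:ℂ) * Complex.I) * ((K : ℂ) * n) := by
        field_simp at hn
        linear_combination (2 * (π:ℂ) * Complex.I) * hn
      have : (c : ℂ) = (K : ℂ) * n := mul_left_cancel₀ h2pi hc
      exact_mod_cast this
    have hzK : z ^ K = 1 := by
      rw [hzdef, ← Complex.exp_nat_mul]
      have : (K : ℂ) * (2 * π * Complex.I * c / K) = c * (2 * π * Complex.I) := by
        field_simp
      rw [this, Complex.exp_int_mul_two_pi_mul_I]
    rw [geom_sum_eq hz1, hzK, sub_self, zero_div]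

lemma dvd_iff_eq (K : ℕ) (n m : ℕ) (hn : n < K) (hm : m < K) :
    (K : ℤ) ∣ ((n : ℤ) - m) ↔ n = m := by
  constructor
  · intro h
    have := Int.eq_zero_of_dvd_of_natAbs_lt_natAbs h (by omega)
    omega
  · rintro rfl; simp

lemma conj_nDFT (K : ℕ) (θ : ℕ → ℝ) (c : ℤ) :
    (starRingEnd ℂ) (nDFT K θ c) = (1 / (K : ℂ)) * ∑ m ∈ Finset.range K,
      Complex.exp (Complex.I * (θ m : ℂ)) *
        Complex.exp (2 * (π : ℂ) * Complex.I * (c : ℂ) * (m : ℂ) / (K : ℂ)) := by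
  rw [nDFT, map_mul, map_sum]
  congr 1
  · simp
  refine Finset.sum_congr rfl fun m _ => ?_
  rw [map_mul, ← Complex.exp_conj, ← Complex.exp_conj]
  congr 2 <;> simp [map_div₀, map_ofNat, Complex.conj_ofReal] <;> ring

lemma parseval (K : ℕ) (hK : 0 < K) (θ : ℕ → ℝ) (a b : ℤ) :
    ∑ d ∈ Finset.range K, nDFT K θ (a - d) * (starRingEnd ℂ) (nDFT K θ (b - d)) =
      if (K : ℤ) ∣ (a - b) then 1 else 0 := by
  have hKne : (K : ℂ) ≠ 0 := Nat.cast_ne_zero.2 hK.ne'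
  have key : ∀ d ∈ Finset.range K,
      nDFT K θ (a - d) * (starRingEnd ℂ) (nDFT K θ (b - d)) =
      (1 / (K : ℂ))^2 * ∑ n ∈ Finset.range K, ∑ m ∈ Finset.range K,
        (Complex.exp (-Complex.I * (θ n : ℂ)) * Complex.exp (Complex.I * (θ m : ℂ)) *
          Complex.exp (-2 * (π : ℂ) * Complex.I * (a : ℂ) * (n : ℂ) / K) *
          Complex.exp (2 * (π : ℂ) * Complex.I * (b : ℂ) * (m : ℂ) / K)) *
        Complex.exp (2 * (π : ℂ) * Complex.I * (((n : ℂ) - (m : ℂ)) * (d : ℂ)) / K) := by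
    intro d _
    rw [nDFT, conj_nDFT, mul_mul_mul_comm, ← sq, Finset.sum_mul_sum]
    congr 1
    refine Finset.sum_congr rfl fun n _ => Finset.sum_congr rfl fun m _ => ?_
    simp only [← Complex.exp_add]
    congr 1
    push_cast
    field_simp
    ring
  rw [Finset.sum_congr rfl key, ← Finset.mul_sum, Finset.sum_comm]
  have inner : ∀ n ∈ Finset.range K,
      ∑ d ∈ Finset.range K, ∑ m ∈ Finset.range K,
        (Complex.exp (-Complex.I * (θ n : ℂ)) * Complex.exp (Complex.I * (θ m : ℂ)) *
          Complex.exp (-2 * (π : ℂ) * Complex.I * (a : ℂ) * (n : ℂ) / K) *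
          Complex.exp (2 * (π : ℂ) * Complex.I * (b : ℂ) * (m : ℂ) / K)) *
        Complex.exp (2 * (π : ℂ) * Complex.I * (((n : ℂ) - (m : ℂ)) * (d : ℂ)) / K)
      = (Complex.exp (-2 * (π : ℂ) * Complex.I * (a : ℂ) * (n : ℂ) / K) *
          Complex.exp (2 * (π : ℂ) * Complex.I * (b : ℂ) * (n : ℂ) / K)) * K := by
    intro n hn
    rw [Finset.sum_comm]
    have hm : ∀ m ∈ Finset.range K,
        ∑ d ∈ Finset.range K,
        (Complex.exp (-Complex.I * (θ n : ℂ)) * Complex.exp (Complex.I * (θ m : ℂ)) *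
          Complex.exp (-2 * (π : ℂ) * Complex.I * (a : ℂ) * (n : ℂ) / K) *
          Complex.exp (2 * (π : ℂ) * Complex.I * (b : ℂ) * (m : ℂ) / K)) *
        Complex.exp (2 * (π : ℂ) * Complex.I * (((n : ℂ) - (m : ℂ)) * (d : ℂ)) / K)
        = (Complex.exp (-Complex.I * (θ n : ℂ)) * Complex.exp (Complex.I * (θ m : ℂ)) *
          Complex.exp (-2 * (π : ℂ) * Complex.I * (a : ℂ) * (n : ℂ) / K) *
          Complex.exp (2 * (π : ℂ) * Complex.I * (b : ℂ) * (m : ℂ) / K)) *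
          (if (K : ℤ) ∣ ((n : ℤ) - m) then (K : ℂ) else 0) := by
      intro m _
      have horth := exp_sum_orth K hK ((n : ℤ) - m)
      push_cast at horth
      rw [← Finset.mul_sum, horth]
    rw [Finset.sum_congr rfl hm, Finset.sum_eq_single n]
    · rw [if_pos (by simp : (K : ℤ) ∣ (n : ℤ) - n)]
      rw [← Complex.exp_add, neg_mul, neg_add_cancel, Complex.exp_zero, one_mul]
    · intro m hmr hne
      rw [if_neg (by
        rw [dvd_iff_eq K n m (Finset.mem_range.1 hn) (Finset.mem_range.1 hmr)]
        exact fun h => hne h.symm), mul_zero]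
    · intro hnn; exact absurd hn hnn
  rw [Finset.sum_congr rfl inner]
  have comb : ∀ n ∈ Finset.range K,
      (Complex.exp (-2 * (π : ℂ) * Complex.I * (a : ℂ) * (n : ℂ) / K) *
        Complex.exp (2 * (π : ℂ) * Complex.I * (b : ℂ) * (n : ℂ) / K)) * (K : ℂ)
      = Complex.exp (2 * (π : ℂ) * Complex.I * ((((b - a : ℤ)) : ℂ) * (n : ℂ)) / K) * K := by
    intro n _
    rw [← Complex.exp_add]
    congr 2
    push_cast
    field_simp
    ring
  rw [Finset.sum_congr rfl comb, ← Finset.sum_mul, exp_sum_orth K hK (b - a)]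
  by_cases h : (K : ℤ) ∣ (a - b)
  · rw [if_pos (dvd_sub_comm.1 h), if_pos h]
    field_simp
  · rw [if_neg (fun hc => h (dvd_sub_comm.1 hc)), if_neg h]
    simp

lemma nDFT_congr (K : ℕ) (hK : 0 < K) (θ : ℕ → ℝ) (a b : ℤ)
    (h : (K : ℤ) ∣ (a - b)) : nDFT K θ a = nDFT K θ b := by
  have hKne : (K : ℂ) ≠ 0 := Nat.cast_ne_zero.2 hK.ne'
  obtain ⟨t, ht⟩ := h
  have ha : (a : ℂ) = (b : ℂ) + (K : ℂ) * (t : ℂ) := by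
    have : a = b + (K : ℤ) * t := by omega
    exact_mod_cast congrArg (Int.cast : ℤ → ℂ) this
  unfold nDFT
  congr 1
  refine Finset.sum_congr rfl fun n _ => ?_
  congr 1
  rw [show (-2 * (π : ℂ) * Complex.I * (a : ℂ) * (n : ℂ) / K) =
      (-2 * (π : ℂ) * Complex.I * (b : ℂ) * (n : ℂ) / K) +
      ((-t * n : ℤ) : ℂ) * (2 * π * Complex.I) from by
    push_cast
    rw [ha]
    field_simp
    ring]
  rw [Complex.exp_add, Complex.exp_int_mul_two_pi_mul_I, mul_one]

theorem punctured_matched_filter_energy_of_nDFT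
    (K : ℕ) (hK : 0 < K) (θ : ℕ → ℝ)
    (Ghat : Finset ℤ) (hGhat : ∀ a ∈ Ghat, ∀ b ∈ Ghat, (K : ℤ) ∣ (a - b) → a = b)
    (k : ℤ) :
    ∑ kbar ∈ (Finset.range K).filter (fun kbar : ℕ => ¬ (K : ℤ) ∣ ((kbar : ℤ) - k)),
        ‖∑ kdot ∈ Ghat,
          (starRingEnd ℂ) (nDFT K θ kdot) * nDFT K θ (kdot + k - kbar)‖ ^ 2 =
      (∑ kdot ∈ Ghat, ‖nDFT K θ kdot‖ ^ 2) -
        (∑ kdot ∈ Ghat, ‖nDFT K θ kdot‖ ^ 2) ^ 2 := by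
  set Ω := nDFT K θ with hΩ
  set S : ℤ → ℂ := fun kbar => ∑ kdot ∈ Ghat, (starRingEnd ℂ) (Ω kdot) * Ω (kdot + k - kbar)
    with hS
  set Pc : ℂ := ∑ a ∈ Ghat, Ω a * (starRingEnd ℂ) (Ω a) with hPc
  -- conj of S
  have hconjS : ∀ d : ℤ, (starRingEnd ℂ) (S d) =
      ∑ b ∈ Ghat, Ω b * (starRingEnd ℂ) (Ω (b + k - d)) := by
    intro d
    rw [hS, map_sum]
    exact Finset.sum_congr rfl fun b _ => by rw [map_mul, RingHomCompTriple.comp_apply]; simp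
  -- Step B : full-period sum
  have hB : ∑ kbar ∈ Finset.range K, S kbar * (starRingEnd ℂ) (S kbar) = Pc := by
    have expand : ∀ kbar ∈ Finset.range K, S kbar * (starRingEnd ℂ) (S kbar) =
        ∑ a ∈ Ghat, ∑ b ∈ Ghat,
          ((starRingEnd ℂ) (Ω a) * Ω b) *
            (Ω ((a + k) - kbar) * (starRingEnd ℂ) (Ω ((b + k) - kbar))) := by
      intro kbar _
      rw [hconjS, hS, Finset.sum_mul_sum]
      refine Finset.sum_congr rfl fun a _ => Finset.sum_congr rfl fun b _ => ?_
      rw [show a + k - (kbar : ℤ) = (a + k) - kbar from by ring,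
          show b + k - (kbar : ℤ) = (b + k) - kbar from by ring]
      ring
    rw [Finset.sum_congr rfl expand, Finset.sum_comm]
    have h1 : ∀ a ∈ Ghat, ∑ kbar ∈ Finset.range K, ∑ b ∈ Ghat,
        ((starRingEnd ℂ) (Ω a) * Ω b) *
          (Ω ((a + k) - kbar) * (starRingEnd ℂ) (Ω ((b + k) - kbar)))
        = Ω a * (starRingEnd ℂ) (Ω a) := by
      intro a ha
      rw [Finset.sum_comm]
      have h2 : ∀ b ∈ Ghat, ∑ kbar ∈ Finset.range K,
          ((starRingEnd ℂ) (Ω a) * Ω b) *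
            (Ω ((a + k) - kbar) * (starRingEnd ℂ) (Ω ((b + k) - kbar)))
          = ((starRingEnd ℂ) (Ω a) * Ω b) * (if (K : ℤ) ∣ (a - b) then 1 else 0) := by
        intro b _
        rw [← Finset.mul_sum, hΩ, parseval K hK θ (a + k) (b + k),
            show (a + k) - (b + k) = a - b from by ring]
      rw [Finset.sum_congr rfl h2, Finset.sum_eq_single a]
      · rw [if_pos (by simp), mul_one]; ring
      · intro b hb hne
        rw [if_neg (fun hd => hne (hGhat a ha b hb hd).symm), mul_zero]
      · intro h; exact absurd ha h
    rw [Finset.sum_congr rfl h1]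
  -- Step C : the excluded point
  set k₀ : ℕ := (k % (K : ℤ)).toNat with hk₀
  have hk₀K : k₀ < K := by
    have h1 : 0 ≤ k % (K : ℤ) := Int.emod_nonneg k (by exact_mod_cast hK.ne')
    have h2 : k % (K : ℤ) < K := Int.emod_lt_of_pos k (by exact_mod_cast hK)
    omega
  have hk₀cast : (k₀ : ℤ) = k % (K : ℤ) := by
    have h1 : 0 ≤ k % (K : ℤ) := Int.emod_nonneg k (by exact_mod_cast hK.ne')
    omega
  have hdvd : (K : ℤ) ∣ ((k₀ : ℤ) - k) := by
    refine ⟨-(k / K), ?_⟩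
    rw [hk₀cast, Int.emod_def]
    ring
  have hSk0 : S k₀ = Pc := by
    rw [hS, hPc]
    refine Finset.sum_congr rfl fun a _ => ?_
    rw [hΩ, nDFT_congr K hK θ (a + k - k₀) a (by
      have : a + k - (k₀ : ℤ) - a = -((k₀ : ℤ) - k) := by ring
      rw [this]
      exact dvd_neg.2 hdvd)]
    ring
  have hconjPc : (starRingEnd ℂ) Pc = Pc := by
    rw [hPc, map_sum]
    exact Finset.sum_congr rfl fun a _ => by rw [map_mul, RingHomCompTriple.comp_apply]; simp [mul_comm]
  -- Step D : split the sum
  have hfilter : (Finset.range K).filter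
      (fun kbar : ℕ => ¬¬ (K : ℤ) ∣ ((kbar : ℤ) - k)) = {k₀} := by
    ext x
    simp only [Finset.mem_filter, Finset.mem_range, not_not, Finset.mem_singleton]
    constructor
    · rintro ⟨hx, hd⟩
      have : (K : ℤ) ∣ ((x : ℤ) - k₀) := by
        have := dvd_sub hd hdvd
        simpa using this
      exact (dvd_iff_eq K x k₀ hx hk₀K).1 this
    · rintro rfl
      exact ⟨hk₀K, hdvd⟩
  have hsplit := Finset.sum_filter_add_sum_filter_not (Finset.range K)
    (fun kbar : ℕ => ¬ (K : ℤ) ∣ ((kbar : ℤ) - k))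
    (fun kbar : ℕ => S kbar * (starRingEnd ℂ) (S kbar))
  rw [hfilter] at hsplit
  have hC : ∑ kbar ∈ (Finset.range K).filter
      (fun kbar : ℕ => ¬ (K : ℤ) ∣ ((kbar : ℤ) - k)),
      S kbar * (starRingEnd ℂ) (S kbar) = Pc - Pc ^ 2 := by
    have h1 : ∑ kbar ∈ ({k₀} : Finset ℕ), S kbar * (starRingEnd ℂ) (S kbar) = Pc ^ 2 := by
      rw [Finset.sum_singleton, hSk0, hconjPc, sq]
    rw [hB] at hsplit
    rw [h1] at hsplit
    exact eq_sub_of_add_eq hsplit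
  -- Step E : back to the reals
  have habs : ∀ z : ℂ, ((‖z‖ : ℝ) : ℂ) ^ 2 = z * (starRingEnd ℂ) z := by
    intro z
    rw [← Complex.ofReal_pow, Complex.sq_norm, Complex.mul_conj]
  have hPreal : ((∑ kdot ∈ Ghat, ‖Ω kdot‖ ^ 2 : ℝ) : ℂ) = Pc := by
    rw [hPc]
    push_cast
    exact Finset.sum_congr rfl fun a _ => habs (Ω a)
  apply Complex.ofReal_injective
  push_cast
  calc (∑ kbar ∈ (Finset.range K).filter
      (fun kbar : ℕ => ¬ (K : ℤ) ∣ ((kbar : ℤ) - k)),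
        ((‖S kbar‖ : ℂ)) ^ 2)
      = ∑ kbar ∈ (Finset.range K).filter
        (fun kbar : ℕ => ¬ (K : ℤ) ∣ ((kbar : ℤ) - k)),
        S kbar * (starRingEnd ℂ) (S kbar) :=
        Finset.sum_congr rfl fun kbar _ => habs (S kbar)
    _ = Pc - Pc ^ 2 := hC
    _ = _ := by
        rw [← hPreal]
        push_cast
        ring
end

section
/- Let K be a positive integer, let θ[0], …, θ[K−1] be real numbers, and let Ω[k] = (1/K)·∑_{n=0}^{K−1} exp(−i·θ[n])·exp(−2πi·k·n/K). Let ĝ be a nonnegative integer with Ĝ = {−ĝ,…,ĝ}, and let k be an integer such that 2ĝ < |k| and |k| + 2ĝ < K. Then ∑_{k̇=−ĝ}^{ĝ} ( |Ω[k̇]|² + |Ω[k̇+k]|² ) ≤ 1. -/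
open Finset Complex Real

lemma orth (K : ℕ) (hK : 0 < K) (d : ℤ) :
    ∑ n ∈ Finset.range K, Complex.exp (2 * (Real.pi:ℂ) * Complex.I * d * n / K)
      = if (K:ℤ) ∣ d then (K:ℂ) else 0 := by
  have hKc : (K:ℂ) ≠ 0 := Nat.cast_ne_zero.2 hK.ne'
  set ζ : ℂ := Complex.exp (2 * (Real.pi:ℂ) * Complex.I * d / K) with hζdef
  have hpow : ∀ n : ℕ, Complex.exp (2 * (Real.pi:ℂ) * Complex.I * d * n / K) = ζ ^ n := by
    intro n
    rw [hζdef, ← Complex.exp_nat_mul]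
    ring_nf
  simp only [hpow]
  split_ifs with hdvd
  · obtain ⟨m, rfl⟩ := hdvd
    have hζ1 : ζ = 1 := by
      rw [hζdef]
      have h2 : 2 * (Real.pi:ℂ) * Complex.I * (((K:ℤ) * m : ℤ):ℂ) / K
          = (m:ℂ) * (2 * π * Complex.I) := by
        push_cast
        field_simp
      rw [h2, Complex.exp_int_mul_two_pi_mul_I]
    simp [hζ1]
  · have hζK : ζ ^ K = 1 := by
      rw [hζdef, ← Complex.exp_nat_mul]
      have h3 : (K:ℂ) * (2 * (Real.pi:ℂ) * Complex.I * d / K) = (d:ℂ) * (2 * π * Complex.I) := by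
        field_simp
      rw [h3, Complex.exp_int_mul_two_pi_mul_I]
    have hζ1 : ζ ≠ 1 := by
      intro h
      rw [hζdef, Complex.exp_eq_one_iff] at h
      obtain ⟨m, hm⟩ := h
      apply hdvd
      refine ⟨m, ?_⟩
      have hπ : (2 * (Real.pi:ℂ) * Complex.I) ≠ 0 := by
        simp [Real.pi_ne_zero, Complex.I_ne_zero]
      have hd : (d:ℂ) = (K:ℂ) * m := by
        field_simp at hm
        have h5 : 2 * (Real.pi:ℂ) * Complex.I * d = 2 * (Real.pi:ℂ) * Complex.I * ((K:ℂ) * m) := by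
          linear_combination (2 * (Real.pi:ℂ) * Complex.I) * hm
        exact mul_left_cancel₀ hπ h5
      exact_mod_cast hd
    rw [geom_sum_eq hζ1, hζK]
    simp

lemma parsevalC (K : ℕ) (hK : 0 < K) (θ : ℕ → ℝ) :
    ∑ j ∈ Finset.range K, nDFT K θ j * (starRingEnd ℂ) (nDFT K θ j) = 1 := by
  have hKc : (K:ℂ) ≠ 0 := Nat.cast_ne_zero.2 hK.ne'
  have expand : ∀ j : ℕ, nDFT K θ (j:ℤ) * (starRingEnd ℂ) (nDFT K θ (j:ℤ)) =
      (1/(K:ℂ))^2 * ∑ n ∈ Finset.range K, ∑ m ∈ Finset.range K,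
        (Complex.exp (-Complex.I * (θ n:ℂ)) * Complex.exp (Complex.I * (θ m:ℂ))) *
          Complex.exp (2 * (Real.pi:ℂ) * Complex.I * ((((m:ℤ) - (n:ℤ)):ℤ):ℂ) * (j:ℂ) / K) := by
    intro j
    rw [nDFT, map_mul, map_sum, mul_mul_mul_comm]
    congr 1
    · rw [map_div₀, map_one]
      push_cast
      simp [sq]
    · rw [Finset.sum_mul_sum]
      refine Finset.sum_congr rfl fun n _ => Finset.sum_congr rfl fun m _ => ?_
      rw [map_mul, ← Complex.exp_conj, ← Complex.exp_conj]
      simp only [map_mul, map_div₀, map_neg, map_ofNat, Complex.conj_I, Complex.conj_ofReal,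
        Complex.conj_natCast, map_intCast, map_natCast]
      simp only [← Complex.exp_add]
      congr 1
      push_cast
      ring
  calc ∑ j ∈ Finset.range K, nDFT K θ j * (starRingEnd ℂ) (nDFT K θ j)
      = (1/(K:ℂ))^2 * ∑ j ∈ Finset.range K, ∑ n ∈ Finset.range K, ∑ m ∈ Finset.range K,
        (Complex.exp (-Complex.I * (θ n:ℂ)) * Complex.exp (Complex.I * (θ m:ℂ))) *
          Complex.exp (2 * (Real.pi:ℂ) * Complex.I * ((((m:ℤ) - (n:ℤ)):ℤ):ℂ) * (j:ℂ) / K) := by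
        rw [Finset.mul_sum]; exact Finset.sum_congr rfl fun j _ => expand j
    _ = (1/(K:ℂ))^2 * ∑ n ∈ Finset.range K, ∑ m ∈ Finset.range K,
        (Complex.exp (-Complex.I * (θ n:ℂ)) * Complex.exp (Complex.I * (θ m:ℂ))) *
          ∑ j ∈ Finset.range K,
            Complex.exp (2 * (Real.pi:ℂ) * Complex.I * ((((m:ℤ) - (n:ℤ)):ℤ):ℂ) * (j:ℂ) / K) := by
        congr 1
        rw [Finset.sum_comm]
        refine Finset.sum_congr rfl fun n _ => ?_
        rw [Finset.sum_comm]
        refine Finset.sum_congr rfl fun m _ => ?_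
        rw [Finset.mul_sum]
    _ = (1/(K:ℂ))^2 * ∑ n ∈ Finset.range K, ∑ m ∈ Finset.range K,
        (Complex.exp (-Complex.I * (θ n:ℂ)) * Complex.exp (Complex.I * (θ m:ℂ))) *
          (if m = n then (K:ℂ) else 0) := by
        congr 1
        refine Finset.sum_congr rfl fun n hn => Finset.sum_congr rfl fun m hm => ?_
        rw [orth K hK ((m:ℤ) - (n:ℤ))]
        congr 1
        simp only [Finset.mem_range] at hn hm
        by_cases h : m = n
        · simp [h]
        · have hnd : ¬ (K:ℤ) ∣ ((m:ℤ) - (n:ℤ)) := by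
            intro hd
            have := Int.eq_zero_of_abs_lt_dvd hd (abs_lt.mpr (by omega))
            omega
          simp [h, hnd]
    _ = 1 := by
        have : ∀ n ∈ Finset.range K, (∑ m ∈ Finset.range K,
            (Complex.exp (-Complex.I * (θ n:ℂ)) * Complex.exp (Complex.I * (θ m:ℂ))) *
              (if m = n then (K:ℂ) else 0)) = (K:ℂ) := by
          intro n hn
          rw [Finset.sum_congr rfl (fun m _ => by
            rw [mul_ite, mul_zero] :
            ∀ m ∈ Finset.range K, _ = if m = n then
              (Complex.exp (-Complex.I * (θ n:ℂ)) * Complex.exp (Complex.I * (θ m:ℂ))) * (K:ℂ)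
              else 0)]
          rw [Finset.sum_ite_eq' (Finset.range K) n]
          rw [if_pos hn, ← Complex.exp_add]
          ring_nf
          rw [Complex.exp_zero, one_mul]
        rw [Finset.sum_congr rfl this, Finset.sum_const, Finset.card_range]
        field_simp
        ring

lemma parsevalR (K : ℕ) (hK : 0 < K) (θ : ℕ → ℝ) :
    ∑ j ∈ Finset.range K, ‖nDFT K θ j‖ ^ 2 = 1 := by
  have h := parsevalC K hK θ
  have h2 : ((∑ j ∈ Finset.range K, ‖nDFT K θ j‖ ^ 2 : ℝ) : ℂ) = 1 := by
    push_cast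
    rw [← h]
    refine Finset.sum_congr rfl fun j _ => ?_
    rw [Complex.mul_conj]
    norm_cast
    exact Complex.sq_norm _
  exact_mod_cast h2

lemma nDFT_emod (K : ℕ) (hK : 0 < K) (θ : ℕ → ℝ) (a : ℤ) :
    nDFT K θ a = nDFT K θ (a % K) := by
  have hKc : (K:ℂ) ≠ 0 := Nat.cast_ne_zero.2 hK.ne'
  unfold nDFT
  congr 1
  refine Finset.sum_congr rfl fun n _ => ?_
  congr 1
  rw [Complex.exp_eq_exp_iff_exists_int]
  refine ⟨-((a / K) * n), ?_⟩
  have ha : a = K * (a / K) + a % K := (Int.mul_ediv_add_emod a K).symm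
  have haC : (a:ℂ) = (K:ℂ) * ((a / (K:ℤ) : ℤ):ℂ) + ((a % (K:ℤ) : ℤ):ℂ) := by exact_mod_cast ha
  push_cast
  field_simp
  linear_combination (-(n:ℂ)) * haC

theorem shifted_partial_parseval_of_nDFT
    (K : ℕ) (hK : 0 < K) (θ : ℕ → ℝ)
    (ghat : ℕ) (k : ℤ)
    (h₁ : 2 * (ghat : ℤ) < |k|) (h₂ : |k| + 2 * (ghat : ℤ) < (K : ℤ)) :
    ∑ kdot ∈ Finset.Icc (-(ghat : ℤ)) (ghat : ℤ),
        (‖nDFT K θ kdot‖ ^ 2 + ‖nDFT K θ (kdot + k)‖ ^ 2) ≤ 1 := by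
  have hKZ : (0:ℤ) < K := by exact_mod_cast hK
  have habs : 0 ≤ |k| := abs_nonneg k
  set F : ℕ → ℝ := fun j => ‖nDFT K θ j‖ ^ 2 with hF
  have hFnn : ∀ j, 0 ≤ F j := fun j => sq_nonneg _
  set e₁ : ℤ → ℕ := fun a => (a % K).toNat with he₁
  set e₂ : ℤ → ℕ := fun a => ((a + k) % K).toNat with he₂
  have hmod : ∀ a : ℤ, ((a % K).toNat : ℤ) = a % K := fun a =>
    Int.toNat_of_nonneg (Int.emod_nonneg a hKZ.ne')
  have hval₁ : ∀ a : ℤ, ‖nDFT K θ a‖ ^ 2 = F (e₁ a) := by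
    intro a
    rw [hF, he₁]
    simp only
    rw [hmod a, ← nDFT_emod K hK θ a]
  have hval₂ : ∀ a : ℤ, ‖nDFT K θ (a + k)‖ ^ 2 = F (e₂ a) := by
    intro a
    rw [hF, he₂]
    simp only
    rw [hmod (a + k), ← nDFT_emod K hK θ (a + k)]
  -- key divisibility fact
  have key : ∀ a b : ℤ, a % K = b % K → (K:ℤ) ∣ (b - a) := by
    intro a b h
    exact Int.ModEq.dvd h
  have hinj₁ : ∀ a ∈ Finset.Icc (-(ghat:ℤ)) (ghat:ℤ), ∀ b ∈ Finset.Icc (-(ghat:ℤ)) (ghat:ℤ),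
      e₁ a = e₁ b → a = b := by
    intro a ha b hb h
    simp only [Finset.mem_Icc] at ha hb
    have h' : a % K = b % K := by
      have := congrArg (fun x : ℕ => (x:ℤ)) h
      simpa [he₁, hmod] using this
    have hd := key a b h'
    have := Int.eq_zero_of_abs_lt_dvd hd (abs_lt.mpr (by omega))
    omega
  have hinj₂ : ∀ a ∈ Finset.Icc (-(ghat:ℤ)) (ghat:ℤ), ∀ b ∈ Finset.Icc (-(ghat:ℤ)) (ghat:ℤ),
      e₂ a = e₂ b → a = b := by
    intro a ha b hb h
    simp only [Finset.mem_Icc] at ha hb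
    have h' : (a + k) % K = (b + k) % K := by
      have := congrArg (fun x : ℕ => (x:ℤ)) h
      simpa [he₂, hmod] using this
    have hd := key (a + k) (b + k) h'
    have := Int.eq_zero_of_abs_lt_dvd hd (abs_lt.mpr (by omega))
    omega
  set A := (Finset.Icc (-(ghat:ℤ)) (ghat:ℤ)).image e₁ with hA
  set B := (Finset.Icc (-(ghat:ℤ)) (ghat:ℤ)).image e₂ with hB
  have hdisj : Disjoint A B := by
    rw [Finset.disjoint_left]
    intro x hx hx'
    rw [hA, Finset.mem_image] at hx
    rw [hB, Finset.mem_image] at hx'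
    obtain ⟨a, ha, rfl⟩ := hx
    obtain ⟨b, hb, hba⟩ := hx'
    simp only [Finset.mem_Icc] at ha hb
    have h' : (b + k) % K = a % K := by
      have := congrArg (fun x : ℕ => (x:ℤ)) hba
      simpa [he₁, he₂, hmod] using this
    have hd := key (b + k) a h'
    have h0 := Int.eq_zero_of_abs_lt_dvd hd (by
      have h6 : |a - (b + k)| ≤ |a - b| + |k| := by
        have := abs_sub_abs_le_abs_sub (a - b) k
        calc |a - (b + k)| = |(a - b) - k| := by ring_nf
          _ ≤ |a - b| + |k| := abs_sub _ _
      have h7 : |a - b| ≤ 2 * (ghat:ℤ) := abs_le.mpr (by omega)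
      omega)
    -- h0 : a - (b + k) = 0, so k = a - b, |k| ≤ 2ghat, contradiction
    have h8 : |k| ≤ 2 * (ghat:ℤ) := by
      have : k = a - b := by omega
      rw [this]
      exact abs_le.mpr (by omega)
    omega
  have hsub : A ∪ B ⊆ Finset.range K := by
    intro x hx
    rw [Finset.mem_union] at hx
    rw [Finset.mem_range]
    rcases hx with hx | hx
    · rw [hA, Finset.mem_image] at hx
      obtain ⟨a, _, rfl⟩ := hx
      have h1 := Int.emod_lt_of_pos a hKZ
      have h2 := Int.emod_nonneg a hKZ.ne'
      simp only [he₁]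
      omega
    · rw [hB, Finset.mem_image] at hx
      obtain ⟨a, _, rfl⟩ := hx
      have h1 := Int.emod_lt_of_pos (a + k) hKZ
      have h2 := Int.emod_nonneg (a + k) hKZ.ne'
      simp only [he₂]
      omega
  calc ∑ kdot ∈ Finset.Icc (-(ghat:ℤ)) (ghat:ℤ),
        (‖nDFT K θ kdot‖ ^ 2 + ‖nDFT K θ (kdot + k)‖ ^ 2)
      = ∑ kdot ∈ Finset.Icc (-(ghat:ℤ)) (ghat:ℤ), F (e₁ kdot)
        + ∑ kdot ∈ Finset.Icc (-(ghat:ℤ)) (ghat:ℤ), F (e₂ kdot) := by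
        rw [← Finset.sum_add_distrib]
        exact Finset.sum_congr rfl fun a _ => by rw [hval₁ a, hval₂ a]
    _ = ∑ x ∈ A, F x + ∑ x ∈ B, F x := by
        rw [hA, hB, Finset.sum_image hinj₁, Finset.sum_image hinj₂]
    _ = ∑ x ∈ A ∪ B, F x := (Finset.sum_union hdisj).symm
    _ ≤ ∑ x ∈ Finset.range K, F x :=
        Finset.sum_le_sum_of_subset_of_nonneg hsub fun i _ _ => hFnn i
    _ = 1 := parsevalR K hK θ
end

section
/- Let E_s, Q, R be strictly positive real numbers and define g: ℝ → ℝ by g(x) = x·(E_s − x)/(Q·x + E_s·R). Let x* = E_s·(√(R² + Q·R) − R)/Q. Then 0 < x* < E_s, and x* is the unique maximizer of g on the interval [0, E_s]; that is, g(x) ≤ g(x*) for all x ∈ [0, E_s], with equality only for x = x*. -/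
open Real Set

theorem optimal_reference_power_allocation
    (Es Q R : ℝ) (hEs : 0 < Es) (hQ : 0 < Q) (hR : 0 < R)
    (g : ℝ → ℝ) (hg : ∀ x : ℝ, g x = x * (Es - x) / (Q * x + Es * R))
    (xstar : ℝ) (hxstar : xstar = Es * (Real.sqrt (R ^ 2 + Q * R) - R) / Q) :
    (0 < xstar ∧ xstar < Es) ∧
    (∀ x ∈ Set.Icc (0 : ℝ) Es, g x ≤ g xstar) ∧
    (∀ x ∈ Set.Icc (0 : ℝ) Es, g x = g xstar → x = xstar) := by
  have hnn : (0:ℝ) ≤ R ^ 2 + Q * R := by positivity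
  have hs2 : Real.sqrt (R ^ 2 + Q * R) ^ 2 = R ^ 2 + Q * R := Real.sq_sqrt hnn
  have hsnn := Real.sqrt_nonneg (R ^ 2 + Q * R)
  have hsR : R < Real.sqrt (R ^ 2 + Q * R) := by
    nlinarith [hs2, hsnn]
  have hsQR : Real.sqrt (R ^ 2 + Q * R) < Q + R := by
    nlinarith [hs2, hsnn]
  have hx0 : 0 < xstar := by
    rw [hxstar]
    exact div_pos (mul_pos hEs (by linarith)) hQ
  have hxE : xstar < Es := by
    rw [hxstar, div_lt_iff₀ hQ]
    nlinarith
  have hq : Q * xstar ^ 2 + 2 * R * Es * xstar - R * Es ^ 2 = 0 := by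
    rw [hxstar]
    generalize Real.sqrt (R ^ 2 + Q * R) = s at hs2 ⊢
    field_simp
    linear_combination (Es ^ 2) * hs2
  have key : ∀ x : ℝ, 0 ≤ x → g xstar - g x = (x - xstar) ^ 2 / (Q * x + Es * R) := by
    intro x hx
    have hd : 0 < Q * x + Es * R := by nlinarith [mul_nonneg hQ.le hx]
    have hds : 0 < Q * xstar + Es * R := by positivity
    rw [hg, hg]
    field_simp
    linear_combination (x - xstar) * hq
  refine ⟨⟨hx0, hxE⟩, ?_, ?_⟩
  · intro x hx
    have h := key x hx.1
    have hd : 0 < Q * x + Es * R := by nlinarith [mul_nonneg hQ.le hx.1]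
    have : 0 ≤ (x - xstar) ^ 2 / (Q * x + Es * R) := by positivity
    linarith
  · intro x hx heq
    have h := key x hx.1
    have hd : 0 < Q * x + Es * R := by nlinarith [mul_nonneg hQ.le hx.1]
    have h0 : (x - xstar) ^ 2 / (Q * x + Es * R) = 0 := by linarith
    rw [div_eq_zero_iff] at h0
    rcases h0 with h0 | h0
    · nlinarith [pow_eq_zero_iff (n := 2) two_ne_zero |>.mp h0]
    · linarith
end

section
/- Let K = K₁+K₂+1 with K₁, K₂ nonnegative integers, 𝒦 = {−K₁,…,K₂}, let ĝ, g be nonnegative integers with 2ĝ ≤ g, Ĝ = {−ĝ,…,ĝ}, 𝒢 = {−g,…,g}, and fix k ∈ 𝒦\𝒢 such that the elements of Ĝ ∪ (k+Ĝ) are pairwise distinct modulo K. Let Δ: ℤ → ℝ be a K-periodic function with Δ[j] ≥ 0 for all j and ∑_{j=0}^{K−1} Δ[j] = 1. Let M ≥ 0, N₀ ≥ 0, E^r ≥ 0, E^d ≥ 0, β_max ≥ 0 be reals, and let b_{k̄} for k̄ ∈ 𝒦 be reals with 0 ≤ b_{k̄} ≤ β_max. Then ∑_{k̇∈Ĝ}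 M·N₀·( b_0·E^r·Δ[k̇+k] + ∑_{k̄∈𝒦\𝒢} b_{k̄}·E^d·Δ[k+k̇−k̄] ) + ∑_{k̇∈Ĝ} M·b_0·N₀·E^r·Δ[k̇] + M·(2ĝ+1)·N₀² ≤ M·β_max·N₀·( E^r + (2ĝ+1)·E^d ) + M·(2ĝ+1)·N₀². -/
open Finset

theorem noise_power_bound
    (K₁ K₂ K : ℕ) (hK : K = K₁ + K₂ + 1)
    (ghat g : ℕ) (hgg : 2 * ghat ≤ g)
    (Kset Gset Ghat : Finset ℤ)
    (hKset : Kset = Finset.Icc (-(K₁ : ℤ)) (K₂ : ℤ))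
    (hGset : Gset = Finset.Icc (-(g : ℤ)) (g : ℤ))
    (hGhat : Ghat = Finset.Icc (-(ghat : ℤ)) (ghat : ℤ))
    (k : ℤ) (hk : k ∈ Kset \ Gset)
    (hdist : ∀ a ∈ Ghat ∪ Ghat.image (· + k), ∀ b ∈ Ghat ∪ Ghat.image (· + k),
      (K : ℤ) ∣ (a - b) → a = b)
    (Δ : ℤ → ℝ) (hΔper : ∀ j : ℤ, Δ (j + K) = Δ j) (hΔpos : ∀ j : ℤ, 0 ≤ Δ j)
    (hΔsum : ∑ j ∈ Finset.range K, Δ (j : ℤ) = 1)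
    (M N₀ Er Ed βmax : ℝ)
    (hM : 0 ≤ M) (hN₀ : 0 ≤ N₀) (hEr : 0 ≤ Er) (hEd : 0 ≤ Ed) (hβmax : 0 ≤ βmax)
    (b : ℤ → ℝ) (hb : ∀ kbar ∈ Kset, 0 ≤ b kbar ∧ b kbar ≤ βmax) :
    (∑ kdot ∈ Ghat, M * N₀ *
        (b 0 * Er * Δ (kdot + k) + ∑ kbar ∈ Kset \ Gset, b kbar * Ed * Δ (k + kdot - kbar)))
      + (∑ kdot ∈ Ghat, M * b 0 * N₀ * Er * Δ kdot)
      + M * (2 * ghat + 1) * N₀ ^ 2 ≤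
    M * βmax * N₀ * (Er + (2 * ghat + 1) * Ed) + M * (2 * ghat + 1) * N₀ ^ 2 := by
  have hKpos : 0 < (K : ℤ) := by exact_mod_cast Nat.pos_of_ne_zero (by omega)
  have hper : Function.Periodic Δ (K : ℤ) := hΔper
  -- Δ only depends on the residue mod K
  have hmod : ∀ j : ℤ, Δ (j % (K : ℤ)) = Δ j := by
    intro j
    conv_rhs => rw [← Int.emod_add_mul_ediv j (K : ℤ)]
    rw [mul_comm]
    exact ((hper.int_mul (j / K)) (j % (K : ℤ))).symm
  -- sum over Ico 0 K equals 1
  have himg : Finset.Ico (0 : ℤ) (K : ℤ) = (Finset.range K).image (fun n : ℕ => (n : ℤ)) := by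
    ext x
    simp only [Finset.mem_Ico, Finset.mem_image, Finset.mem_range]
    constructor
    · rintro ⟨h0, hx⟩
      exact ⟨x.toNat, by omega, by omega⟩
    · rintro ⟨n, hn, rfl⟩
      exact ⟨by positivity, by exact_mod_cast hn⟩
  have hsumIco : ∑ j ∈ Finset.Ico (0 : ℤ) (K : ℤ), Δ j = 1 := by
    rw [himg, Finset.sum_image (by intro a _ c _ h; simp only at h; exact_mod_cast h)]
    exact hΔsum
  -- key lemma: sum of Δ over pairwise-distinct-mod-K set is ≤ 1
  have key : ∀ S : Finset ℤ, (∀ a ∈ S, ∀ c ∈ S, (K : ℤ) ∣ (a - c) → a = c) →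
      ∑ s ∈ S, Δ s ≤ 1 := by
    intro S hS
    calc ∑ s ∈ S, Δ s = ∑ s ∈ S, Δ (s % (K : ℤ)) := by
          exact Finset.sum_congr rfl (fun s _ => (hmod s).symm)
      _ = ∑ r ∈ S.image (· % (K : ℤ)), Δ r := by
          rw [Finset.sum_image]
          intro a ha c hc h
          apply hS a ha c hc
          exact Int.dvd_of_emod_eq_zero (Int.emod_eq_emod_iff_emod_sub_eq_zero.mp h)
      _ ≤ ∑ r ∈ Finset.Ico (0 : ℤ) (K : ℤ), Δ r := by
          apply Finset.sum_le_sum_of_subset_of_nonneg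
          · intro r hr
            obtain ⟨s, _, rfl⟩ := Finset.mem_image.mp hr
            exact Finset.mem_Ico.mpr ⟨Int.emod_nonneg s (by omega), Int.emod_lt_of_pos s hKpos⟩
          · intro j _ _; exact hΔpos j
      _ = 1 := hsumIco
  have hknotG : k ∉ Gset := (Finset.mem_sdiff.mp hk).2
  -- disjointness of Ghat and its shift
  have hdisj : Disjoint Ghat (Ghat.image (· + k)) := by
    rw [Finset.disjoint_left]
    intro x hx hx'
    obtain ⟨y, hy, rfl⟩ := Finset.mem_image.mp hx'
    rw [hGhat, Finset.mem_Icc] at hx hy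
    exact hknotG (by rw [hGset, Finset.mem_Icc]; omega)
  -- the big Erlang sum bound
  have hA : ∑ kdot ∈ Ghat, (Δ (kdot + k) + Δ kdot) ≤ 1 := by
    have h1 : ∑ kdot ∈ Ghat, (Δ (kdot + k) + Δ kdot)
        = ∑ s ∈ Ghat ∪ Ghat.image (· + k), Δ s := by
      rw [Finset.sum_union hdisj, Finset.sum_add_distrib, Finset.sum_image
        (by intro a _ c _ h; simp only at h; omega), add_comm]
    rw [h1]
    exact key _ hdist
  -- inner sum bound
  have hinner : ∀ kdot : ℤ, ∑ kbar ∈ Kset \ Gset, Δ (k + kdot - kbar) ≤ 1 := by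
    intro kdot
    have h1 : ∑ kbar ∈ Kset \ Gset, Δ (k + kdot - kbar)
        = ∑ s ∈ (Kset \ Gset).image (fun kbar => k + kdot - kbar), Δ s := by
      rw [Finset.sum_image (by intro a _ c _ h; simp only at h; omega)]
    rw [h1]
    apply key
    intro a ha c hc hdvd
    obtain ⟨ka, hka, rfl⟩ := Finset.mem_image.mp ha
    obtain ⟨kc, hkc, rfl⟩ := Finset.mem_image.mp hc
    have hka' := (Finset.mem_sdiff.mp hka).1
    have hkc' := (Finset.mem_sdiff.mp hkc).1
    rw [hKset, Finset.mem_Icc] at hka' hkc'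
    have hz : (k + kdot - ka) - (k + kdot - kc) = 0 := by
      apply Int.eq_zero_of_abs_lt_dvd hdvd
      rw [abs_lt]; omega
    omega
  -- nonnegativity / bounds on b
  have h0K : (0 : ℤ) ∈ Kset := by rw [hKset, Finset.mem_Icc]; omega
  obtain ⟨hb0, hb0'⟩ := hb 0 h0K
  -- cardinality of Ghat
  have hcardn : Ghat.card = 2 * ghat + 1 := by
    rw [hGhat, Int.card_Icc]; omega
  have hcard : (Ghat.card : ℝ) = 2 * (ghat : ℝ) + 1 := by
    rw [hcardn]; push_cast; ring
  -- nonneg of inner sums of Δ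
  have hΔsumnn : ∀ kdot : ℤ, 0 ≤ ∑ kbar ∈ Kset \ Gset, Δ (k + kdot - kbar) :=
    fun kdot => Finset.sum_nonneg fun i _ => hΔpos _
  -- bound the first big sum termwise
  have hstep1 : ∑ kdot ∈ Ghat, M * N₀ *
        (b 0 * Er * Δ (kdot + k) + ∑ kbar ∈ Kset \ Gset, b kbar * Ed * Δ (k + kdot - kbar))
      ≤ ∑ kdot ∈ Ghat, M * N₀ * (βmax * Er * Δ (kdot + k) + βmax * Ed) := by
    apply Finset.sum_le_sum
    intro kdot _
    apply mul_le_mul_of_nonneg_left _ (by positivity)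
    apply add_le_add
    · exact mul_le_mul_of_nonneg_right
        (mul_le_mul_of_nonneg_right hb0' hEr) (hΔpos _)
    · calc ∑ kbar ∈ Kset \ Gset, b kbar * Ed * Δ (k + kdot - kbar)
          ≤ ∑ kbar ∈ Kset \ Gset, βmax * Ed * Δ (k + kdot - kbar) := by
            apply Finset.sum_le_sum
            intro kbar hkbar
            have := hb kbar (Finset.mem_sdiff.mp hkbar).1
            exact mul_le_mul_of_nonneg_right
              (mul_le_mul_of_nonneg_right this.2 hEd) (hΔpos _)
        _ = βmax * Ed * ∑ kbar ∈ Kset \ Gset, Δ (k + kdot - kbar) := by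
            rw [Finset.mul_sum]
        _ ≤ βmax * Ed * 1 := by
            exact mul_le_mul_of_nonneg_left (hinner kdot) (by positivity)
        _ = βmax * Ed := mul_one _
  have hstep2 : ∑ kdot ∈ Ghat, M * b 0 * N₀ * Er * Δ kdot
      ≤ ∑ kdot ∈ Ghat, M * βmax * N₀ * Er * Δ kdot := by
    apply Finset.sum_le_sum
    intro kdot _
    have : M * b 0 ≤ M * βmax := mul_le_mul_of_nonneg_left hb0' hM
    exact mul_le_mul_of_nonneg_right (mul_le_mul_of_nonneg_right
      (mul_le_mul_of_nonneg_right this hN₀) hEr) (hΔpos _)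
  have hmain : ∑ kdot ∈ Ghat, M * N₀ * (βmax * Er * Δ (kdot + k) + βmax * Ed)
      + ∑ kdot ∈ Ghat, M * βmax * N₀ * Er * Δ kdot
      ≤ M * βmax * N₀ * (Er + (2 * ghat + 1) * Ed) := by
    calc ∑ kdot ∈ Ghat, M * N₀ * (βmax * Er * Δ (kdot + k) + βmax * Ed)
          + ∑ kdot ∈ Ghat, M * βmax * N₀ * Er * Δ kdot
        = ∑ kdot ∈ Ghat, (M * βmax * N₀ * Er * (Δ (kdot + k) + Δ kdot) + M * N₀ * βmax * Ed) := by
          rw [← Finset.sum_add_distrib]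
          exact Finset.sum_congr rfl fun _ _ => by ring
      _ = M * βmax * N₀ * Er * (∑ kdot ∈ Ghat, (Δ (kdot + k) + Δ kdot))
          + M * N₀ * βmax * Ed * Ghat.card := by
          rw [Finset.sum_add_distrib, ← Finset.mul_sum, Finset.sum_const, nsmul_eq_mul]
          ring
      _ ≤ M * βmax * N₀ * Er * 1 + M * N₀ * βmax * Ed * (2 * ghat + 1) := by
          apply add_le_add
          · exact mul_le_mul_of_nonneg_left hA (by positivity)
          · rw [hcard]
      _ = M * βmax * N₀ * (Er + (2 * ghat + 1) * Ed) := by ring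
  linarith [hstep1, hstep2, hmain]
end
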